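/- Let n ≥ m ≥ 1, let A be a real n×m matrix such that AᵀA is positive definite, let U be a real n×(n−m) matrix with UᵀU = I_{n−m} and AᵀU = 0, and let E be any real n×n matrix. Form the n×n matrix W whose first n−m columns are the columns of (I_n + E)·U and whose last m columns are the columns of A. Then |det W| = |det(I_{n−m} + Uᵀ E U)| · √(det(AᵀA)). -/

import Mathlib

open Matrix

/-- **Block-determinant factorization for the normal-bundle Jacobian.**
Let `n = k + m`, `A` a real `n×m` matrix with `AᵀA` positive definite, `U` a real
`n×k` matrix with `UᵀU = I` and `AᵀU = 0`, and `E` any real `n×n` matrix. The `n×n`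
matrix `W` whose first `k` columns are those of `(I + E)U` and whose last `m` columns
are those of `A` satisfies `|det W| = |det(I + UᵀEU)| · √(det(AᵀA))`. -/
theorem block_determinant_factorization
    (k m : ℕ) (hm : 1 ≤ m)
    (A : Matrix (Fin (k + m)) (Fin m) ℝ)
    (hA : (Aᵀ * A).PosDef)
    (U : Matrix (Fin (k + m)) (Fin k) ℝ)
    (hU : Uᵀ * U = 1)
    (hAU : Aᵀ * U = 0)
    (E : Matrix (Fin (k + m)) (Fin (k + m)) ℝ) :
    |((Matrix.fromCols ((1 + E) * U) A).submatrix id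
        (finSumFinEquiv (m := k) (n := m)).symm).det|
      = |(1 + Uᵀ * E * U).det| * Real.sqrt (Aᵀ * A).det := by
  set e := (finSumFinEquiv (m := k) (n := m)) with he
  set d := (Aᵀ * A).det with hd_def
  have hd : 0 < d := hA.det_pos
  set V := (Matrix.fromCols U A).submatrix id e.symm with hVdef
  set W := (Matrix.fromCols ((1 + E) * U) A).submatrix id e.symm with hWdef
  have hUA : Uᵀ * A = 0 := by
    have := congrArg Matrix.transpose hAU
    simpa [Matrix.transpose_mul] using this
  have h1 : Uᵀ * ((1 + E) * U) = 1 + Uᵀ * E * U := by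
    rw [Matrix.add_mul, Matrix.one_mul, Matrix.mul_add, hU, ← Matrix.mul_assoc]
  have h2 : Aᵀ * ((1 + E) * U) = Aᵀ * E * U := by
    rw [Matrix.add_mul, Matrix.one_mul, Matrix.mul_add, hAU, ← Matrix.mul_assoc, zero_add]
  have hblock : (Matrix.fromCols U A)ᵀ * Matrix.fromCols ((1 + E) * U) A
      = Matrix.fromBlocks (1 + Uᵀ * E * U) 0 (Aᵀ * E * U) (Aᵀ * A) := by
    rw [Matrix.transpose_fromCols, Matrix.fromRows_mul_fromCols, h1, h2, hUA]
  have hblock2 : (Matrix.fromCols U A)ᵀ * Matrix.fromCols U A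
      = Matrix.fromBlocks 1 0 0 (Aᵀ * A) := by
    rw [Matrix.transpose_fromCols, Matrix.fromRows_mul_fromCols, hU, hUA, hAU]
  have hVW : V.det * W.det = (1 + Uᵀ * E * U).det * d := by
    have : (Vᵀ * W).det = (1 + Uᵀ * E * U).det * d := by
      rw [hVdef, hWdef, Matrix.transpose_submatrix,
        ← Matrix.submatrix_mul _ _ _ _ _ Function.bijective_id,
        hblock, Matrix.det_submatrix_equiv_self, Matrix.det_fromBlocks_zero₁₂, hd_def]
    rwa [Matrix.det_mul, Matrix.det_transpose] at this
  have hVV : V.det ^ 2 = d := by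
    have : (Vᵀ * V).det = d := by
      rw [hVdef, Matrix.transpose_submatrix,
        ← Matrix.submatrix_mul _ _ _ _ _ Function.bijective_id,
        hblock2, Matrix.det_submatrix_equiv_self, Matrix.det_fromBlocks_zero₁₂,
        Matrix.det_one, one_mul, hd_def]
    rw [Matrix.det_mul, Matrix.det_transpose] at this
    rw [sq]; exact this
  have habsV : |V.det| = Real.sqrt d := by
    rw [← Real.sqrt_sq_eq_abs, hVV]
  have hsq : Real.sqrt d > 0 := Real.sqrt_pos.mpr hd
  have key : |V.det| * |W.det| = |V.det| * (|(1 + Uᵀ * E * U).det| * Real.sqrt d) := by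
    rw [← abs_mul, hVW, abs_mul, abs_of_pos hd, habsV]
    linear_combination |(1 + Uᵀ * E * U).det| * (Real.mul_self_sqrt hd.le).symm
  have hVne : |V.det| ≠ 0 := by rw [habsV]; exact ne_of_gt hsq
  have := mul_left_cancel₀ hVne key
  rw [this]
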